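/- Every homeomorphism f of the real line can be written as f = g ∘ h, where g and h are homeomorphisms of ℝ, each of which is reversible in H(ℝ); that is, there exist homeomorphisms k₁ and k₂ of ℝ with k₁ ∘ g ∘ k₁⁻¹ = g⁻¹ and k₂ ∘ h ∘ k₂⁻¹ = h⁻¹. (In other words, H(ℝ) = R₂(H(ℝ)).) -/

import Mathlib

/-- `f` is a homeomorphism of `ℝ`: a bijection of `ℝ` that is continuous in both directions. -/
def IsHomeo (f : Equiv.Perm ℝ) : Prop := Continuous f ∧ Continuous f.symm

open Filter Topology

noncomputable def permOf (u : ℝ → ℝ) (hm : StrictMono u) (hs : Function.Surjective u) :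
    Equiv.Perm ℝ := (StrictMono.orderIsoOfSurjective u hm hs).toEquiv

lemma permOf_apply (u : ℝ → ℝ) (hm : StrictMono u) (hs : Function.Surjective u) (x : ℝ) :
    permOf u hm hs x = u x := rfl

lemma isHomeo_permOf (u : ℝ → ℝ) (hm : StrictMono u) (hs : Function.Surjective u) :
    IsHomeo (permOf u hm hs) :=
  ⟨(StrictMono.orderIsoOfSurjective u hm hs).toHomeomorph.continuous,
   (StrictMono.orderIsoOfSurjective u hm hs).toHomeomorph.symm.continuous⟩

lemma strictMono_symm {w : Equiv.Perm ℝ} (hwm : StrictMono ⇑w) : StrictMono ⇑w.symm := by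
  intro x y hxy
  by_contra hc
  push_neg at hc
  have h2 : w (w.symm y) ≤ w (w.symm x) := by
    rcases eq_or_lt_of_le hc with h | h
    · exact le_of_eq (congrArg w h)
    · exact (hwm h).le
  simp at h2
  exact absurd h2 (not_le.mpr hxy)

lemma strictAnti_symm {w : Equiv.Perm ℝ} (hwa : StrictAnti ⇑w) : StrictAnti ⇑w.symm := by
  intro x y hxy
  by_contra hc
  push_neg at hc
  have h2 : w (w.symm y) ≤ w (w.symm x) := by
    rcases eq_or_lt_of_le hc with h | h
    · exact le_of_eq (congrArg w h).symm
    · exact (hwa h).le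
  simp at h2
  exact absurd h2 (not_le.mpr hxy)

theorem reversible_of_gt (w : Equiv.Perm ℝ) (hwc : Continuous ⇑w) (hws : Continuous ⇑w.symm)
    (hwm : StrictMono ⇑w) (hgt : ∀ x, x < w x) :
    ∃ k : Equiv.Perm ℝ, IsHomeo k ∧ k * w * k⁻¹ = w⁻¹ := by
  -- strict monotonicity of all integer powers
  have hmz : ∀ z : ℤ, StrictMono ⇑(w ^ z) := by
    intro z
    induction z using Int.induction_on with
    | zero => simpa using strictMono_id
    | succ n ih =>
        have h : w ^ ((n : ℤ) + 1) = w ^ (n : ℤ) * w := zpow_add_one w n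
        rw [h, Equiv.Perm.coe_mul]
        exact ih.comp hwm
    | pred n ih =>
        have h : w ^ (-(n : ℤ) - 1) = w ^ (-(n : ℤ)) * w⁻¹ := zpow_sub_one w _
        rw [h, Equiv.Perm.coe_mul]
        exact ih.comp (strictMono_symm hwm)
  have hpow : ∀ (z₁ z₂ : ℤ) (x : ℝ), (w ^ z₁) ((w ^ z₂) x) = (w ^ (z₁ + z₂)) x := by
    intro z₁ z₂ x
    rw [← Equiv.Perm.mul_apply, ← zpow_add]
  set a : ℤ → ℝ := fun n => (w ^ n) 0 with ha_def
  have ha_succ : ∀ n : ℤ, a (n + 1) = w (a n) := by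
    intro n
    show (w ^ (n + 1)) 0 = w ((w ^ n) 0)
    rw [add_comm n 1, ← hpow 1 n 0, zpow_one]
  have ham : StrictMono a := strictMono_int_of_lt_succ fun n => by
    rw [ha_succ]; exact hgt (a n)
  -- orbit is unbounded above
  have hub : ∀ y : ℝ, ∃ n : ℤ, y < a n := by
    by_contra h
    push_neg at h
    obtain ⟨y, hy⟩ := h
    set b : ℕ → ℝ := fun n => a n with hb_def
    have hbm : Monotone b := fun i j hij => ham.monotone (by exact_mod_cast hij)
    have hbdd : BddAbove (Set.range b) := ⟨y, by rintro _ ⟨n, rfl⟩; exact hy n⟩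
    have hL : Tendsto b atTop (𝓝 (⨆ n, b n)) := tendsto_atTop_ciSup hbm hbdd
    set L := ⨆ n, b n with hL_def
    have h1 : Tendsto (fun n => w (b n)) atTop (𝓝 (w L)) := (hwc.tendsto L).comp hL
    have h2 : (fun n => w (b n)) = fun n => b (n + 1) := by
      funext n
      show w (a n) = a ((n : ℤ) + 1)
      · rw [ha_succ]
    have h3 : Tendsto (fun n => b (n + 1)) atTop (𝓝 L) :=
      hL.comp (tendsto_add_atTop_nat 1)
    have h4 : w L = L := tendsto_nhds_unique (h2 ▸ h1) h3
    exact absurd h4 (ne_of_gt (hgt L))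
  -- orbit is unbounded below
  have hlb : ∀ y : ℝ, ∃ n : ℤ, a n < y := by
    by_contra h
    push_neg at h
    obtain ⟨y, hy⟩ := h
    set c : ℕ → ℝ := fun n => a (-n) with hc_def
    have hcm : Antitone c := fun i j hij => ham.monotone (by exact_mod_cast (neg_le_neg (by exact_mod_cast hij)))
    have hbdd : BddBelow (Set.range c) := ⟨y, by rintro _ ⟨n, rfl⟩; exact hy _⟩
    have hL : Tendsto c atTop (𝓝 (⨅ n, c n)) := tendsto_atTop_ciInf hcm hbdd
    set L := ⨅ n, c n with hL_def
    have h1 : Tendsto (fun n => w.symm (c n)) atTop (𝓝 (w.symm L)) := (hws.tendsto L).comp hL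
    have h2 : (fun n => w.symm (c n)) = fun n => c (n + 1) := by
      funext n
      show w.symm (a (-(n:ℤ))) = a (-(((n:ℕ) + 1 : ℕ) : ℤ))
      have : a (-(n:ℤ)) = w (a (-(n:ℤ) - 1)) := by
        rw [← ha_succ]; ring_nf
      rw [this, Equiv.symm_apply_apply]
      congr 1
      push_cast
      ring
    have h3 : Tendsto (fun n => c (n + 1)) atTop (𝓝 L) :=
      hL.comp (tendsto_add_atTop_nat 1)
    have h4 : w.symm L = L := tendsto_nhds_unique (h2 ▸ h1) h3
    have h5 : w L = L := by
      conv_lhs => rw [← h4]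
      exact w.apply_symm_apply L
    exact absurd h5 (ne_of_gt (hgt L))
  -- floor function w.r.t. the orbit
  have hN : ∀ y : ℝ, ∃ n : ℤ, (a n ≤ y ∧ y < a (n + 1)) := by
    intro y
    obtain ⟨m, hm⟩ := hlb y
    obtain ⟨M, hM⟩ := hub y
    obtain ⟨n, hn1, hn2⟩ := Int.exists_greatest_of_bdd (P := fun z => a z ≤ y)
      ⟨M, fun z hz => (ham.lt_iff_lt.mp (lt_of_le_of_lt hz hM)).le⟩ ⟨m, hm.le⟩
    refine ⟨n, hn1, ?_⟩
    by_contra hc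
    push_neg at hc
    have := hn2 (n + 1) hc
    omega
  set N : ℝ → ℤ := fun y => (hN y).choose with hN_def
  have hN1 : ∀ y, a (N y) ≤ y := fun y => (hN y).choose_spec.1
  have hN2 : ∀ y, y < a (N y + 1) := fun y => (hN y).choose_spec.2
  have hNu : ∀ (y : ℝ) (n : ℤ), a n ≤ y → y < a (n + 1) → N y = n := by
    intro y n h1 h2
    by_contra hc
    rcases lt_or_gt_of_ne hc with h | h
    · have : a (N y + 1) ≤ a n := ham.monotone (by omega)
      exact absurd (lt_of_lt_of_le (hN2 y) (le_trans this h1)) (lt_irrefl y)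
    · have : a (n + 1) ≤ a (N y) := ham.monotone (by omega)
      exact absurd (lt_of_lt_of_le h2 (le_trans this (hN1 y))) (lt_irrefl y)
  have ha0 : a 0 = 0 := by
    show (w ^ (0:ℤ)) 0 = 0
    rw [zpow_zero]; rfl
  have a1pos : 0 < a 1 := by
    rw [← ha0]; exact ham (by norm_num)
  -- the conjugating map
  set φ : ℝ → ℝ := fun y => (N y : ℝ) + ((w ^ (-(N y))) y) / a 1 with hφ_def
  have ht : ∀ y : ℝ, 0 ≤ (w ^ (-(N y))) y ∧ (w ^ (-(N y))) y < a 1 := by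
    intro y
    constructor
    · have := (hmz (-(N y))).monotone (hN1 y)
      rwa [show (w ^ (-(N y))) (a (N y)) = 0 by
        show (w ^ (-(N y))) ((w ^ (N y)) 0) = 0
        rw [hpow, neg_add_cancel, zpow_zero]; rfl] at this
    · have := hmz (-(N y)) (hN2 y)
      rwa [show (w ^ (-(N y))) (a (N y + 1)) = a 1 by
        show (w ^ (-(N y))) ((w ^ (N y + 1)) 0) = (w ^ (1:ℤ)) 0
        rw [hpow]; ring_nf] at this
  have hφ_lb : ∀ y, (N y : ℝ) ≤ φ y := fun y => by
    have := (ht y).1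
    simp only [hφ_def]
    have : 0 ≤ ((w ^ (-(N y))) y) / a 1 := div_nonneg this a1pos.le
    linarith
  have hφ_ub : ∀ y, φ y < N y + 1 := fun y => by
    have := (ht y).2
    have : ((w ^ (-(N y))) y) / a 1 < 1 := (div_lt_one a1pos).mpr this
    simp only [hφ_def]
    linarith
  have hφm : StrictMono φ := by
    intro y₁ y₂ h12
    have hn : N y₁ ≤ N y₂ := by
      have : a (N y₁) < a (N y₂ + 1) :=
        lt_of_le_of_lt (hN1 y₁) (lt_trans h12 (hN2 y₂))
      have := ham.lt_iff_lt.mp this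
      omega
    rcases eq_or_lt_of_le hn with h | h
    · have hz : (w ^ (-(N y₁))) y₁ < (w ^ (-(N y₁))) y₂ := hmz _ h12
      simp only [hφ_def, ← h]
      have hd : ((w ^ (-(N y₁))) y₁) / a 1 < ((w ^ (-(N y₁))) y₂) / a 1 := by gcongr
      linarith
    · calc φ y₁ < N y₁ + 1 := hφ_ub y₁
        _ ≤ (N y₂ : ℝ) := by exact_mod_cast Int.add_one_le_iff.mpr h
        _ ≤ φ y₂ := hφ_lb y₂
  have hφs : Function.Surjective φ := by
    intro s
    set n : ℤ := ⌊s⌋ with hn_def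
    set fr : ℝ := s - n with hfr_def
    have hfr0 : 0 ≤ fr := by
      have := Int.floor_le s; simp only [hfr_def]; linarith
    have hfr1 : fr < 1 := by
      have := Int.lt_floor_add_one s; simp only [hfr_def]; linarith
    set x0 : ℝ := fr * a 1 with hx0_def
    have hx00 : 0 ≤ x0 := mul_nonneg hfr0 a1pos.le
    have hx01 : x0 < a 1 := by
      calc x0 < 1 * a 1 := by apply mul_lt_mul_of_pos_right hfr1 a1pos
        _ = a 1 := one_mul _
    refine ⟨(w ^ n) x0, ?_⟩
    have hy1 : a n ≤ (w ^ n) x0 := by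
      have := (hmz n).monotone hx00
      rwa [show (w ^ n) (0:ℝ) = a n from rfl] at this
    have hy2 : (w ^ n) x0 < a (n + 1) := by
      have := hmz n hx01
      rwa [show (w ^ n) (a 1) = a (n + 1) by
        show (w ^ n) ((w ^ (1:ℤ)) 0) = (w ^ (n + 1)) 0
        rw [hpow]] at this
    have hNy : N ((w ^ n) x0) = n := hNu _ n hy1 hy2
    simp only [hφ_def, hNy]
    rw [hpow, neg_add_cancel, zpow_zero]
    show (n : ℝ) + x0 / a 1 = s
    rw [hx0_def, mul_div_assoc, div_self a1pos.ne', mul_one]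
    simp only [hfr_def]; ring
  have hconj : ∀ y, φ (w y) = φ y + 1 := by
    intro y
    have h1 : a (N y + 1) ≤ w y := by
      rw [ha_succ]; exact hwm.monotone (hN1 y)
    have h2 : w y < a (N y + 1 + 1) := by
      rw [ha_succ]; exact hwm (hN2 y)
    have hNwy : N (w y) = N y + 1 := hNu _ _ h1 h2
    have h3 : (w ^ (-(N y + 1))) (w y) = (w ^ (-(N y))) y := by
      conv_lhs => rw [show w y = (w ^ (1:ℤ)) y by rw [zpow_one]]
      rw [hpow]; ring_nf
    simp only [hφ_def, hNwy, h3]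
    push_cast; ring
  -- assemble
  set P : Equiv.Perm ℝ := permOf φ hφm hφs with hP_def
  have hPh := isHomeo_permOf φ hφm hφs
  set T : Equiv.Perm ℝ := Equiv.addRight (1:ℝ) with hT_def
  set S : Equiv.Perm ℝ := Equiv.neg ℝ with hS_def
  have hPT : P * w * P⁻¹ = T := by
    apply Equiv.ext
    intro x
    show P (w (P⁻¹ x)) = T x
    have : P (w (P.symm x)) = φ (w (P.symm x)) := rfl
    rw [show (P⁻¹ : Equiv.Perm ℝ) x = P.symm x from rfl, this, hconj,
      show φ (P.symm x) = P (P.symm x) from rfl, Equiv.apply_symm_apply]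
    rfl
  have hST : S * T * S⁻¹ = T⁻¹ := by
    apply Equiv.ext
    intro x
    show S (T (S.symm x)) = T.symm x
    simp only [hS_def, hT_def, Equiv.neg_symm, Equiv.neg_apply, Equiv.coe_addRight,
      Equiv.addRight_symm]
    ring
  refine ⟨P⁻¹ * S * P, ⟨?_, ?_⟩, ?_⟩
  · show Continuous ⇑(P⁻¹ * S * P)
    rw [Equiv.Perm.coe_mul, Equiv.Perm.coe_mul]
    exact (hPh.2.comp continuous_neg).comp hPh.1
  · show Continuous ⇑(P⁻¹ * S * P).symm
    have : (P⁻¹ * S * P).symm = ((P⁻¹ * S * P)⁻¹ : Equiv.Perm ℝ) := rfl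
    rw [this]
    have h6 : ((P⁻¹ * S * P)⁻¹ : Equiv.Perm ℝ) = P⁻¹ * S⁻¹ * P := by group
    rw [h6, Equiv.Perm.coe_mul, Equiv.Perm.coe_mul]
    have hSc : Continuous ⇑(S⁻¹ : Equiv.Perm ℝ) := by
      have : (S⁻¹ : Equiv.Perm ℝ) = S := by
        apply Equiv.ext; intro x
        show S.symm x = S x
        simp [hS_def]
      rw [this]; exact continuous_neg
    exact (hPh.2.comp hSc).comp hPh.1
  · have hw_eq : w = P⁻¹ * T * P := by rw [← hPT]; group
    calc P⁻¹ * S * P * w * (P⁻¹ * S * P)⁻¹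
        = P⁻¹ * (S * T * S⁻¹) * P := by rw [hw_eq]; group
      _ = P⁻¹ * T⁻¹ * P := by rw [hST]
      _ = w⁻¹ := by rw [hw_eq]; group


/-- H(ℝ) = R₂(H(ℝ)): every homeomorphism of ℝ is a composite of two homeomorphisms,
each reversible in H(ℝ). -/
theorem stmt_1 (f : Equiv.Perm ℝ) (hf : IsHomeo f) :
    ∃ g h : Equiv.Perm ℝ, IsHomeo g ∧ IsHomeo h ∧
      f = g * h ∧
      (∃ k₁ : Equiv.Perm ℝ, IsHomeo k₁ ∧ k₁ * g * k₁⁻¹ = g⁻¹) ∧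
      (∃ k₂ : Equiv.Perm ℝ, IsHomeo k₂ ∧ k₂ * h * k₂⁻¹ = h⁻¹) := by
  rcases Continuous.strictMono_of_inj hf.1 f.injective with hmono | hanti
  · -- increasing case
    set u : ℝ → ℝ := fun x => min x (f x) - 1 with hu_def
    have hum : StrictMono u := fun x y hxy => by
      simp only [hu_def]
      exact sub_lt_sub_right (min_lt_min hxy (hmono hxy)) 1
    have hfT : Filter.Tendsto ⇑f Filter.atTop Filter.atTop :=
      Filter.tendsto_atTop_atTop_of_monotone hmono.monotone
        (fun b => ⟨f.symm b, (f.apply_symm_apply b).ge⟩)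
    have hus : Function.Surjective u := by
      apply Continuous.surjective
      · exact ((continuous_id.min hf.1).sub continuous_const)
      · rw [Filter.tendsto_atTop]
        intro b
        filter_upwards [Filter.eventually_ge_atTop (b + 1),
          hfT.eventually (Filter.eventually_ge_atTop (b + 1))] with x h1 h2
        simp only [hu_def]
        have : b + 1 ≤ min x (f x) := le_min h1 h2
        linarith
      · rw [Filter.tendsto_atBot]
        intro b
        filter_upwards [Filter.eventually_le_atBot (b + 1)] with x h1
        simp only [hu_def]
        have : min x (f x) ≤ x := min_le_left _ _
        linarith
    set p : Equiv.Perm ℝ := permOf u hum hus with hp_def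
    have hph : IsHomeo p := isHomeo_permOf u hum hus
    set g : Equiv.Perm ℝ := f * p⁻¹ with hg_def
    have hgfun : ∀ y, g y = f (p.symm y) := fun y => rfl
    have hgc : Continuous ⇑g := by
      rw [hg_def, Equiv.Perm.coe_mul]
      exact hf.1.comp hph.2
    have hgs : Continuous ⇑g.symm := by
      have : g.symm = ⇑(p * f⁻¹) := by
        rw [hg_def]
        rfl
      rw [this, Equiv.Perm.coe_mul]
      exact hph.1.comp hf.2
    have hgm : StrictMono ⇑g := by
      rw [hg_def, Equiv.Perm.coe_mul]
      exact hmono.comp (strictMono_symm hum)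
    have hggt : ∀ y, y < g y := by
      intro y
      rw [hgfun]
      have h1 : p (p.symm y) = y := p.apply_symm_apply y
      have h2 : u (p.symm y) = y := h1
      have h3 : u (p.symm y) ≤ f (p.symm y) - 1 :=
        sub_le_sub_right (min_le_right _ _) 1
      rw [h2] at h3
      linarith
    obtain ⟨k₁, hk₁h, hk₁⟩ := reversible_of_gt g hgc hgs hgm hggt
    -- p⁻¹ is fixed-point-free above
    have hpinv_gt : ∀ y, y < p⁻¹ y := by
      intro y
      have h1 : u (p.symm y) = y := p.apply_symm_apply y
      have : u (p.symm y) < p.symm y := by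
        simp only [hu_def]
        have := min_le_left (p.symm y) (f (p.symm y))
        linarith
      rw [h1] at this
      exact this
    have hpinvm : StrictMono ⇑(p⁻¹ : Equiv.Perm ℝ) := strictMono_symm hum
    obtain ⟨k₂, hk₂h, hk₂⟩ := reversible_of_gt p⁻¹ hph.2 (by
        show Continuous ⇑(p⁻¹ : Equiv.Perm ℝ).symm
        exact hph.1) hpinvm hpinv_gt
    refine ⟨g, p, ⟨hgc, hgs⟩, hph, by rw [hg_def]; group, ⟨k₁, hk₁h, hk₁⟩,
      ⟨k₂, hk₂h, ?_⟩⟩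
    have h7 : k₂ * p * k₂⁻¹ = (k₂ * p⁻¹ * k₂⁻¹)⁻¹ := by group
    rw [h7, hk₂]
    group
  · -- decreasing case
    have hsanti : StrictAnti ⇑f.symm := strictAnti_symm hanti
    have hfix : ∃ q : ℝ, f q = q := by
      rcases lt_trichotomy (f 0) 0 with h0 | h0 | h0
      · have hc : ContinuousOn (fun x => f x - x) (Set.Icc (f 0) 0) :=
          (hf.1.sub continuous_id).continuousOn
        have hmem : (0:ℝ) ∈ Set.Icc ((fun x => f x - x) 0) ((fun x => f x - x) (f 0)) := by
          constructor
          · simpa using h0.le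
          · have : f 0 < f (f 0) := hanti h0
            simp only
            linarith
        obtain ⟨q, _, hq⟩ := intermediate_value_Icc' h0.le hc hmem
        simp only at hq
        exact ⟨q, by linarith⟩
      · exact ⟨0, h0⟩
      · have hc : ContinuousOn (fun x => f x - x) (Set.Icc 0 (f 0)) :=
          (hf.1.sub continuous_id).continuousOn
        have hmem : (0:ℝ) ∈ Set.Icc ((fun x => f x - x) (f 0)) ((fun x => f x - x) 0) := by
          constructor
          · have : f (f 0) < f 0 := hanti h0
            simp only
            linarith
          · simpa using h0.le
        obtain ⟨q, _, hq⟩ := intermediate_value_Icc' h0.le hc hmem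
        simp only at hq
        exact ⟨q, by linarith⟩
    obtain ⟨q, hq⟩ := hfix
    have hq' : f.symm q = q := by
      conv_lhs => rw [← hq]
      exact f.symm_apply_apply q
    set u : ℝ → ℝ := fun x =>
      if x ≤ q then max (q - f.symm x) (max (q - f x) (x - q + 1)) else x - q + 1 with hu_def
    have hu_le_one : ∀ x ≤ q, u x ≤ 1 := by
      intro x hx
      have h1 : q ≤ f.symm x := by
        rcases eq_or_lt_of_le hx with h | h
        · rw [h, hq']
        · exact (by rw [← hq']; exact (hsanti h).le : q ≤ f.symm x)
      have h2 : q ≤ f x := by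
        rcases eq_or_lt_of_le hx with h | h
        · rw [h, hq]
        · exact (by rw [← hq]; exact (hanti h).le : q ≤ f x)
      rw [hu_def]
      simp only [if_pos hx]
      apply max_le (by linarith) (max_le (by linarith) (by linarith))
    have hu_gt_one : ∀ x, q < x → 1 < u x := by
      intro x hx
      rw [hu_def]
      simp only [if_neg (not_le.mpr hx)]
      linarith
    have hum : StrictMono u := by
      intro x y hxy
      by_cases hx : x ≤ q
      · by_cases hy : y ≤ q
        · rw [hu_def]
          simp only [if_pos hx, if_pos hy]
          have a1 : q - f.symm x < q - f.symm y := by linarith [hsanti hxy]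
          have a2 : q - f x < q - f y := by linarith [hanti hxy]
          exact max_lt_max a1 (max_lt_max a2 (by linarith))
        · push_neg at hy
          calc u x ≤ 1 := hu_le_one x hx
            _ < u y := hu_gt_one y hy
      · push_neg at hx
        have hy : ¬ (y ≤ q) := not_le.mpr (lt_trans hx hxy)
        rw [hu_def]
        simp only [if_neg (not_le.mpr hx), if_neg hy]
        linarith
    have huc : Continuous u := by
      rw [hu_def]
      have c2 : Continuous fun x : ℝ => x - q + 1 :=
        (continuous_id.sub continuous_const).add continuous_const
      apply Continuous.if_le
      · exact (continuous_const.sub hf.2).max ((continuous_const.sub hf.1).max c2)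
      · exact c2
      · exact continuous_id
      · exact continuous_const
      · intro x hx
        rw [hx, hq, hq']
        norm_num
    have hus : Function.Surjective u := by
      apply Continuous.surjective huc
      · rw [Filter.tendsto_atTop]
        intro b
        filter_upwards [Filter.eventually_ge_atTop (max (q + 1) (b + q))] with x hx
        have hx1 : q + 1 ≤ x := le_trans (le_max_left _ _) hx
        have hx2 : b + q ≤ x := le_trans (le_max_right _ _) hx
        rw [hu_def]
        simp only [if_neg (not_le.mpr (by linarith : q < x))]
        linarith
      · rw [Filter.tendsto_atBot]
        intro b
        filter_upwards [Filter.eventually_le_atBot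
          (min (min (f (q - b)) (f.symm (q - b))) (min q (b + q - 1)))] with x hx
        have hx1 : x ≤ f (q - b) := le_trans hx (le_trans (min_le_left _ _) (min_le_left _ _))
        have hx2 : x ≤ f.symm (q - b) := le_trans hx (le_trans (min_le_left _ _) (min_le_right _ _))
        have hx3 : x ≤ q := le_trans hx (le_trans (min_le_right _ _) (min_le_left _ _))
        have hx4 : x ≤ b + q - 1 := le_trans hx (le_trans (min_le_right _ _) (min_le_right _ _))
        have h1 : q - b ≤ f.symm x := by
          have := hsanti.antitone hx1
          rwa [f.symm_apply_apply] at this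
        have h2 : q - b ≤ f x := by
          have := hanti.antitone hx2
          rwa [f.apply_symm_apply] at this
        rw [hu_def]
        simp only [if_pos hx3]
        apply max_le (by linarith) (max_le (by linarith) (by linarith))
    set p : Equiv.Perm ℝ := permOf u hum hus with hp_def
    have hph : IsHomeo p := isHomeo_permOf u hum hus
    set S : Equiv.Perm ℝ := Equiv.neg ℝ with hS_def
    set r : Equiv.Perm ℝ := p⁻¹ * S * p with hr_def
    have hSS : S * S = 1 := by
      apply Equiv.ext
      intro x
      show S (S x) = x
      simp [hS_def]
    have hrr : r * r = 1 := by
      have e : r * r = p⁻¹ * (S * S) * p := by rw [hr_def]; group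
      rw [e, hSS]
      group
    have hrinv : r⁻¹ = r := inv_eq_of_mul_eq_one_right hrr
    have hrc : Continuous ⇑r := by
      rw [hr_def, Equiv.Perm.coe_mul, Equiv.Perm.coe_mul]
      exact (hph.2.comp continuous_neg).comp hph.1
    have hr_apply : ∀ x, r x = p.symm (-(u x)) := fun x => rfl
    have hra : StrictAnti ⇑r := by
      intro x y hxy
      rw [hr_apply, hr_apply]
      exact strictMono_symm hum (by linarith [hum hxy])
    have key : ∀ x, -(u x) < u (f.symm x) := by
      intro x
      rcases lt_trichotomy x q with h | h | h
      · have h1 : q < f.symm x := by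
          have := hsanti h
          rwa [hq'] at this
        have h2 : u (f.symm x) = f.symm x - q + 1 := by
          rw [hu_def]
          simp only [if_neg (not_le.mpr h1)]
        have h3 : q - f.symm x ≤ u x := by
          rw [hu_def]
          simp only [if_pos h.le]
          exact le_max_left _ _
        linarith
      · rw [h, hq']
        have huq : u q = 1 := by
          rw [hu_def]
          simp only [if_pos le_rfl, hq, hq']
          norm_num
        rw [huq]
        norm_num
      · have h1 : f.symm x < q := by
          have := hsanti h
          rwa [hq'] at this
        have h2 : u x = x - q + 1 := by
          rw [hu_def]
          simp only [if_neg (not_le.mpr h)]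
        have h3 : q - f (f.symm x) ≤ u (f.symm x) := by
          rw [hu_def]
          simp only [if_pos h1.le]
          exact le_trans (le_max_left _ _) (le_max_right _ _)
        rw [f.apply_symm_apply] at h3
        linarith
    have hr_lt : ∀ x, r x < f.symm x := by
      intro x
      have h1 : u (r x) = -(u x) := by
        rw [hr_apply]
        show p (p.symm (-(u x))) = -(u x)
        exact p.apply_symm_apply _
      have h2 : u (r x) < u (f.symm x) := by
        rw [h1]
        exact key x
      exact hum.lt_iff_lt.mp h2
    obtain ⟨g, hg_def⟩ : ∃ g : Equiv.Perm ℝ, g = f * r * f⁻¹ := ⟨_, rfl⟩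
    obtain ⟨h, hh_def⟩ : ∃ h : Equiv.Perm ℝ, h = f * r := ⟨_, rfl⟩
    have hgg : g * g = 1 := by
      have e : g * g = f * (r * r) * f⁻¹ := by rw [hg_def]; group
      rw [e, hrr]
      group
    have hginv : g⁻¹ = g := inv_eq_of_mul_eq_one_right hgg
    have hgc : Continuous ⇑g := by
      rw [hg_def, Equiv.Perm.coe_mul, Equiv.Perm.coe_mul]
      exact (hf.1.comp hrc).comp hf.2
    have hgh : IsHomeo g := by
      refine ⟨hgc, ?_⟩
      have : ⇑g.symm = ⇑(g⁻¹ : Equiv.Perm ℝ) := rfl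
      rw [this, hginv]
      exact hgc
    have hhc : Continuous ⇑h := by
      rw [hh_def, Equiv.Perm.coe_mul]
      exact hf.1.comp hrc
    have hhs : Continuous ⇑h.symm := by
      have e1 : ⇑h.symm = ⇑(h⁻¹ : Equiv.Perm ℝ) := rfl
      have e2 : (h⁻¹ : Equiv.Perm ℝ) = r * f⁻¹ := by rw [hh_def, mul_inv_rev, hrinv]
      rw [e1, e2, Equiv.Perm.coe_mul]
      exact hrc.comp hf.2
    have hhm : StrictMono ⇑h := by
      rw [hh_def, Equiv.Perm.coe_mul]
      exact hanti.comp hra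
    have hhgt : ∀ x, x < h x := by
      intro x
      have := hanti (hr_lt x)
      rw [f.apply_symm_apply] at this
      rw [hh_def]
      exact this
    obtain ⟨k₂, hk₂h, hk₂⟩ := reversible_of_gt h hhc hhs hhm hhgt
    have h1h : IsHomeo (1 : Equiv.Perm ℝ) := by
      constructor
      · rw [Equiv.Perm.coe_one]
        exact continuous_id
      · show Continuous ⇑(1 : Equiv.Perm ℝ).symm
        have : (1 : Equiv.Perm ℝ).symm = (1 : Equiv.Perm ℝ) := rfl
        rw [this, Equiv.Perm.coe_one]
        exact continuous_id
    refine ⟨g, h, hgh, ⟨hhc, hhs⟩, ?_, ⟨1, h1h, ?_⟩, ⟨k₂, hk₂h, hk₂⟩⟩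
    · have e : g * h = f * (r * r) := by rw [hg_def, hh_def]; group
      rw [e, hrr, mul_one]
    · rw [hginv]
      group
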